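/- Let A and B be positive invertible operators on a Hilbert space with sA ≤ B ≤ tA for some scalars 0 < s ≤ t, and let α, β ∈ [0,1]. Then A ∇_α B ≤ λ (A ♯_β B), where λ = max{(1-α)t^{-β} + α t^{1-β}, (1-α)s^{-β} + α s^{1-β}}. -/

import Mathlib

open scoped ComplexOrder Pointwise

open Matrix in
private lemma contOn {n : ℕ} (f : ℝ → ℝ) (A : Matrix (Fin n) (Fin n) ℂ) :
    ContinuousOn f (spectrum ℝ A) :=
  (Matrix.finite_real_spectrum (A := A)).continuousOn f

private lemma endpoint_eq {u α β : ℝ} (hu : 0 < u) :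
    ((1 - α) * u ^ (-β) + α * u ^ (1 - β)) * u ^ β = (1 - α) + α * u := by
  have h1 : u ^ (-β) * u ^ β = 1 := by
    rw [← Real.rpow_add hu]; simp
  have h2 : u ^ (1 - β) * u ^ β = u := by
    rw [← Real.rpow_add hu]; simp
  calc ((1 - α) * u ^ (-β) + α * u ^ (1 - β)) * u ^ β
      = (1 - α) * (u ^ (-β) * u ^ β) + α * (u ^ (1 - β) * u ^ β) := by ring
    _ = (1 - α) + α * u := by rw [h1, h2]; ring

private lemma scalar_key {s t α β : ℝ} (hs : 0 < s) (hst : s ≤ t) (hα0 : 0 ≤ α) (hα1 : α ≤ 1)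
    (hβ0 : 0 ≤ β) (hβ1 : β ≤ 1) {x : ℝ} (hx : x ∈ Set.Icc s t) :
    (1 - α) + α * x ≤
      max ((1 - α) * t ^ (-β) + α * t ^ (1 - β)) ((1 - α) * s ^ (-β) + α * s ^ (1 - β))
        * x ^ β := by
  have ht : 0 < t := lt_of_lt_of_le hs hst
  set L := max ((1 - α) * t ^ (-β) + α * t ^ (1 - β)) ((1 - α) * s ^ (-β) + α * s ^ (1 - β))
    with hLdef
  have hLt : (1 - α) + α * t ≤ L * t ^ β := by
    rw [← endpoint_eq (α := α) (β := β) ht]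
    exact mul_le_mul_of_nonneg_right (le_max_left _ _) (Real.rpow_nonneg ht.le β)
  have hLs : (1 - α) + α * s ≤ L * s ^ β := by
    rw [← endpoint_eq (α := α) (β := β) hs]
    exact mul_le_mul_of_nonneg_right (le_max_right _ _) (Real.rpow_nonneg hs.le β)
  have hL0 : 0 ≤ L := by
    refine le_trans ?_ (le_max_right _ _)
    have := Real.rpow_nonneg hs.le (-β)
    have := Real.rpow_nonneg hs.le (1 - β)
    nlinarith
  obtain ⟨a, b, ha, hb, hab, hx'⟩ := (Convex.mem_Icc hst).1 hx
  have hconc := (Real.concaveOn_rpow hβ0 hβ1).2 (Set.mem_Ici.2 hs.le) (Set.mem_Ici.2 ht.le)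
    ha hb hab
  calc (1 - α) + α * x = a * ((1 - α) + α * s) + b * ((1 - α) + α * t) := by
        rw [← hx']; linear_combination (α - 1) * hab
    _ ≤ a * (L * s ^ β) + b * (L * t ^ β) :=
        add_le_add (mul_le_mul_of_nonneg_left hLs ha) (mul_le_mul_of_nonneg_left hLt hb)
    _ = L * (a * s ^ β + b * t ^ β) := by ring
    _ ≤ L * x ^ β := by
        refine mul_le_mul_of_nonneg_left ?_ hL0
        have : a * s ^ β + b * t ^ β ≤ (a * s + b * t) ^ β := by
          simpa [smul_eq_mul] using hconc
        rwa [hx'] at this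

open Matrix in
private lemma spec_nonneg {n : ℕ} {M : Matrix (Fin n) (Fin n) ℂ} (hM : M.PosSemidef) :
    ∀ x ∈ spectrum ℝ M, 0 ≤ x := by
  intro x hx
  rw [hM.isHermitian.spectrum_real_eq_range_eigenvalues] at hx
  obtain ⟨i, rfl⟩ := hx
  exact hM.eigenvalues_nonneg i

open Matrix in
private lemma spec_ge {n : ℕ} {M : Matrix (Fin n) (Fin n) ℂ} (c : ℝ)
    (h : (M - c • 1).PosSemidef) : ∀ x ∈ spectrum ℝ M, c ≤ x := by
  intro x hx
  have h1 : x - c ∈ spectrum ℝ M - {c} := Set.sub_mem_sub hx rfl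
  rw [spectrum.sub_singleton_eq] at h1
  rw [show (algebraMap ℝ (Matrix (Fin n) (Fin n) ℂ)) c = c • 1 from
    Algebra.algebraMap_eq_smul_one c] at h1
  linarith [spec_nonneg h _ h1]

open Matrix in
private lemma spec_le {n : ℕ} {M : Matrix (Fin n) (Fin n) ℂ} (c : ℝ)
    (h : (c • 1 - M).PosSemidef) : ∀ x ∈ spectrum ℝ M, x ≤ c := by
  intro x hx
  have h1 : c - x ∈ {c} - spectrum ℝ M := Set.sub_mem_sub rfl hx
  rw [spectrum.singleton_sub_eq] at h1
  rw [show (algebraMap ℝ (Matrix (Fin n) (Fin n) ℂ)) c = c • 1 from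
    Algebra.algebraMap_eq_smul_one c] at h1
  linarith [spec_nonneg h _ h1]
/-- `A ^ r` for a Hermitian matrix, via the continuous functional calculus. -/
noncomputable def mpow {n : ℕ} (A : Matrix (Fin n) (Fin n) ℂ) (r : ℝ) : Matrix (Fin n) (Fin n) ℂ :=
  cfc (fun x : ℝ => x ^ r) A

/-- The β-weighted operator geometric mean `A ♯_β B = A^{1/2}(A^{-1/2} B A^{-1/2})^β A^{1/2}`. -/
noncomputable def geomMean {n : ℕ} (A B : Matrix (Fin n) (Fin n) ℂ) (β : ℝ) :
    Matrix (Fin n) (Fin n) ℂ :=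
  mpow A (1/2) * mpow (mpow A (-(1/2)) * B * mpow A (-(1/2))) β * mpow A (1/2)

/-- The α-weighted operator harmonic mean `A !_α B = ((1-α)A⁻¹ + αB⁻¹)⁻¹`. -/
noncomputable def harmMean {n : ℕ} (A B : Matrix (Fin n) (Fin n) ℂ) (α : ℝ) :
    Matrix (Fin n) (Fin n) ℂ :=
  ((1 - α) • A⁻¹ + α • B⁻¹)⁻¹

open Matrix in
/-- If `0 < sA ≤ B ≤ tA`, then `A ∇_α B ≤ λ (A ♯_β B)`. -/
theorem arith_le_geom {n : ℕ} (A B : Matrix (Fin n) (Fin n) ℂ) (s t α β : ℝ)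
    (hA : A.PosDef) (hB : B.PosDef) (hs : 0 < s) (hst : s ≤ t)
    (hsA : (B - s • A).PosSemidef) (hBt : (t • A - B).PosSemidef)
    (hα0 : 0 ≤ α) (hα1 : α ≤ 1) (hβ0 : 0 ≤ β) (hβ1 : β ≤ 1) :
    (max ((1 - α) * t ^ (-β) + α * t ^ (1 - β)) ((1 - α) * s ^ (-β) + α * s ^ (1 - β))
        • geomMean A B β - ((1 - α) • A + α • B)).PosSemidef := by
  have hAsa : IsSelfAdjoint A := hA.1
  have hApos : ∀ x ∈ spectrum ℝ A, 0 < x := by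
    intro x hx
    rw [hA.isHermitian.spectrum_real_eq_range_eigenvalues] at hx
    obtain ⟨i, rfl⟩ := hx
    exact hA.eigenvalues_pos i
  set X := mpow A (1/2) with hXdef
  set Y := mpow A (-(1/2)) with hYdef
  have hXsa : IsSelfAdjoint X := cfc_predicate _ A
  have hYsa : IsSelfAdjoint Y := cfc_predicate _ A
  have hYh : Y.IsHermitian := hYsa
  have hXX : X * X = A := by
    rw [hXdef, mpow, ← cfc_mul _ _ A (contOn _ A) (contOn _ A)]
    calc cfc (fun x : ℝ => x ^ (1/2 : ℝ) * x ^ (1/2 : ℝ)) A = cfc (fun x : ℝ => x) A := by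
          apply cfc_congr
          intro x hx
          show x ^ (1/2 : ℝ) * x ^ (1/2 : ℝ) = x
          rw [← Real.rpow_add (hApos x hx)]
          norm_num
      _ = A := cfc_id' ℝ A
  have hYX : Y * X = 1 := by
    rw [hXdef, hYdef, mpow, mpow, ← cfc_mul _ _ A (contOn _ A) (contOn _ A)]
    calc cfc (fun x : ℝ => x ^ (-(1/2) : ℝ) * x ^ (1/2 : ℝ)) A = cfc (fun _ : ℝ => (1 : ℝ)) A := by
          apply cfc_congr
          intro x hx
          show x ^ (-(1/2) : ℝ) * x ^ (1/2 : ℝ) = 1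
          rw [← Real.rpow_add (hApos x hx)]
          norm_num
      _ = 1 := by rw [cfc_const 1 A hAsa]; exact map_one _
  have hXY : X * Y = 1 := by
    rw [hXdef, hYdef, mpow, mpow, ← cfc_mul _ _ A (contOn _ A) (contOn _ A)]
    calc cfc (fun x : ℝ => x ^ (1/2 : ℝ) * x ^ (-(1/2) : ℝ)) A = cfc (fun _ : ℝ => (1 : ℝ)) A := by
          apply cfc_congr
          intro x hx
          show x ^ (1/2 : ℝ) * x ^ (-(1/2) : ℝ) = 1
          rw [← Real.rpow_add (hApos x hx)]
          norm_num
      _ = 1 := by rw [cfc_const 1 A hAsa]; exact map_one _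
  set C := Y * B * Y with hCdef
  have hCh : C.IsHermitian := by
    show Cᴴ = C
    rw [hCdef, conjTranspose_mul, conjTranspose_mul, hYh.eq, hB.1.eq, mul_assoc]
  have hCsa : IsSelfAdjoint C := hCh
  have hYAY : Y * A * Y = 1 := by
    rw [← hXX]
    calc Y * (X * X) * Y = (Y * X) * (X * Y) := by simp only [mul_assoc]
      _ = 1 := by rw [hYX, hXY, one_mul]
  have hCs : (C - s • 1).PosSemidef := by
    have h1 : (Y * (B - s • A) * Yᴴ).PosSemidef := hsA.mul_mul_conjTranspose_same Y
    rw [hYh.eq] at h1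
    have h2 : Y * (B - s • A) * Y = C - s • 1 := by
      rw [hCdef, ← hYAY]
      simp only [mul_sub, sub_mul, mul_smul_comm, smul_mul_assoc, mul_assoc]
    rwa [h2] at h1
  have hCt : (t • 1 - C).PosSemidef := by
    have h1 : (Y * (t • A - B) * Yᴴ).PosSemidef := hBt.mul_mul_conjTranspose_same Y
    rw [hYh.eq] at h1
    have h2 : Y * (t • A - B) * Y = t • 1 - C := by
      rw [hCdef, ← hYAY]
      simp only [mul_sub, sub_mul, mul_smul_comm, smul_mul_assoc, mul_assoc]
    rwa [h2] at h1
  have hspec : ∀ x ∈ spectrum ℝ C, x ∈ Set.Icc s t := fun x hx =>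
    ⟨spec_ge s hCs x hx, spec_le t hCt x hx⟩
  set L := max ((1 - α) * t ^ (-β) + α * t ^ (1 - β)) ((1 - α) * s ^ (-β) + α * s ^ (1 - β))
    with hLdef
  have hfnn : ∀ x ∈ spectrum ℝ C, 0 ≤ L * x ^ β - ((1 - α) + α * x) := by
    intro x hx
    have := scalar_key hs hst hα0 hα1 hβ0 hβ1 (hspec x hx)
    linarith
  set g := fun x : ℝ => Real.sqrt (L * x ^ β - ((1 - α) + α * x)) with hgdef
  have hgg : cfc g C * cfc g C = cfc (fun x : ℝ => L * x ^ β - ((1 - α) + α * x)) C := by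
    rw [← cfc_mul _ _ C (contOn _ C) (contOn _ C)]
    apply cfc_congr
    intro x hx
    exact Real.mul_self_sqrt (hfnn x hx)
  have hgsa : IsSelfAdjoint (cfc g C) := cfc_predicate _ C
  have hMpsd : (cfc (fun x : ℝ => L * x ^ β - ((1 - α) + α * x)) C).PosSemidef := by
    rw [← hgg]
    have := Matrix.posSemidef_conjTranspose_mul_self (cfc g C)
    rwa [← Matrix.star_eq_conjTranspose, hgsa.star_eq] at this
  have hMdecomp : cfc (fun x : ℝ => L * x ^ β - ((1 - α) + α * x)) C
      = L • mpow C β - ((1 - α) • 1 + α • C) := by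
    rw [cfc_sub _ _ C (contOn _ C) (contOn _ C),
      cfc_const_mul L (fun x : ℝ => x ^ β) C (contOn _ C),
      cfc_add C _ _ (contOn _ C) (contOn _ C), cfc_const (1 - α) C hCsa,
      cfc_const_mul_id α C hCsa, Algebra.algebraMap_eq_smul_one, mpow]
  have key : (X * (cfc (fun x : ℝ => L * x ^ β - ((1 - α) + α * x)) C) * X).PosSemidef := by
    have := hMpsd.mul_mul_conjTranspose_same X
    rwa [← Matrix.star_eq_conjTranspose, hXsa.star_eq] at this
  rw [hMdecomp] at key
  have hgeom : X * mpow C β * X = geomMean A B β := rfl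
  have hXCX : X * C * X = B := by
    rw [hCdef]
    calc X * (Y * B * Y) * X = (X * Y) * B * (Y * X) := by simp only [mul_assoc]
      _ = B := by rw [hXY, hYX, one_mul, mul_one]
  have hXMX : X * (L • mpow C β - ((1 - α) • 1 + α • C)) * X
      = L • geomMean A B β - ((1 - α) • A + α • B) := by
    rw [← hgeom, ← hXX, ← hXCX]
    simp only [mul_sub, sub_mul, mul_add, add_mul, mul_smul_comm, smul_mul_assoc, mul_one,
      mul_assoc]
  rwa [hXMX] at key
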